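/- Let A > 0, B > 0, c > 0, t1 ∈ ℝ and T′ > 0. Suppose y : [t1, t1+T′) → ℝ is continuous and satisfies y(t) ≥ c + ∫_{t1}^t (A y(τ) + B y(τ)²) dτ for all t ∈ (t1, t1+T′). Then T′ ≤ (1/A) log(1 + A/(B c)). -/

import Mathlib

open Set MeasureTheory intervalIntegral

theorem stmt12 (A B c t1 T' : ℝ) (hA : 0 < A) (hB : 0 < B) (hc : 0 < c) (hT' : 0 < T')
    (y : ℝ → ℝ)
    (hy_cont : ContinuousOn y (Set.Ico t1 (t1 + T')))
    (hy : ∀ t ∈ Set.Ioo t1 (t1 + T'),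
      c + ∫ τ in t1..t, (A * y τ + B * (y τ) ^ 2) ≤ y t) :
    T' ≤ 1 / A * Real.log (1 + A / (B * c)) := by
  set T : ℝ := 1 / A * Real.log (1 + A / (B * c)) with hTdef
  have hTpos : 0 < T := by
    apply mul_pos (by positivity)
    apply Real.log_pos
    have : 0 < A / (B * c) := by positivity
    linarith
  -- the key claim : every point of the interval is within T of t1
  have key : ∀ b ∈ Set.Ioo t1 (t1 + T'), b - t1 ≤ T := by
    rintro b ⟨hb1, hb2⟩
    have harith : ∀ zz yy : ℝ, c ≤ zz → zz ≤ yy →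
        zz * (A + B * zz) ≤ A * yy + B * yy ^ 2 := by
      intro zz yy h1 h2
      have h3 : 0 ≤ yy - zz := by linarith
      have h4 : 0 ≤ yy + zz := by linarith
      nlinarith [mul_nonneg (mul_nonneg hB.le h3) h4, mul_nonneg hA.le h3]
    set f : ℝ → ℝ := fun τ => A * y τ + B * (y τ) ^ 2 with hfdef
    set z : ℝ → ℝ := fun t => c + ∫ τ in t1..t, f τ with hzdef
    have hz_t1 : z t1 = c := by simp [hzdef]
    have hIccIco : Set.Icc t1 b ⊆ Set.Ico t1 (t1 + T') := Set.Icc_subset_Ico_right hb2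
    have hfy_cont : ContinuousOn f (Set.Ico t1 (t1 + T')) :=
      (continuousOn_const.mul hy_cont).add (continuousOn_const.mul (hy_cont.pow 2))
    -- integrability on Icc t1 b
    have hint : IntervalIntegrable f volume t1 b :=
      (hfy_cont.mono hIccIco).intervalIntegrable_of_Icc hb1.le
    -- continuity of z on Icc t1 b
    have hz_cont : ContinuousOn z (Set.Icc t1 b) := by
      apply continuousOn_const.add
      have h := intervalIntegral.continuousOn_primitive_interval
        (μ := volume) (f := f) (a := t1) (b := b) ?_
      · rwa [Set.uIcc_of_le hb1.le] at h
      · rw [Set.uIcc_of_le hb1.le]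
        exact (hfy_cont.mono hIccIco).integrableOn_compact isCompact_Icc
    -- derivative of z on the open interval
    have hzderiv : ∀ t ∈ Set.Ioo t1 (t1 + T'), HasDerivAt z (f t) t := by
      intro t ht
      have h1 : IntervalIntegrable f volume t1 t :=
        (hfy_cont.mono (Set.Icc_subset_Ico_right ht.2)).intervalIntegrable_of_Icc ht.1.le
      have h2 : StronglyMeasurableAtFilter f (nhds t) :=
        ContinuousOn.stronglyMeasurableAtFilter isOpen_Ioo
          (hfy_cont.mono Set.Ioo_subset_Ico_self) t ht
      have h3 : ContinuousAt f t :=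
        hfy_cont.continuousAt (Ico_mem_nhds ht.1 ht.2)
      have h4 := intervalIntegral.integral_hasDerivAt_right h1 h2 h3
      simpa [hzdef] using h4.const_add c
    -- y dominates z
    have hyz : ∀ t ∈ Set.Ioo t1 (t1 + T'), z t ≤ y t := fun t ht => hy t ht
    -- z stays above c/2
    have half : ∀ t ∈ Set.Icc t1 b, c / 2 < z t := by
      by_contra hcontra
      push_neg at hcontra
      obtain ⟨s0, hs0, hs0le⟩ := hcontra
      set K : Set ℝ := Set.Icc t1 b ∩ z ⁻¹' Set.Iic (c / 2) with hKdef
      have hKne : K.Nonempty := ⟨s0, hs0, hs0le⟩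
      have hKclosed : IsClosed K :=
        hz_cont.preimage_isClosed_of_isClosed isClosed_Icc isClosed_Iic
      have hKbdd : BddBelow K := (bddBelow_Icc : BddBelow (Set.Icc t1 b)).mono
        (Set.inter_subset_left)
      set u : ℝ := sInf K with hudef
      have huK : u ∈ K := hKclosed.csInf_mem hKne hKbdd
      obtain ⟨hu1, hu2⟩ := huK
      have hu2' : z u ≤ c / 2 := hu2
      have hut1 : t1 < u := by
        rcases lt_or_eq_of_le hu1.1 with h | h
        · exact h
        · exfalso; rw [← h, hz_t1] at hu2'; linarith
      -- before u, z is above c/2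
      have hbefore : ∀ s ∈ Set.Ico t1 u, c / 2 < z s := by
        intro s hs
        by_contra hle
        push_neg at hle
        have : s ∈ K := ⟨⟨hs.1, hs.2.le.trans hu1.2⟩, hle⟩
        exact absurd (csInf_le hKbdd this) (not_le.mpr hs.2)
      -- z is strictly monotone on Icc t1 u
      have hmono : StrictMonoOn z (Set.Icc t1 u) := by
        apply strictMonoOn_of_deriv_pos (convex_Icc t1 u)
          (hz_cont.mono (Set.Icc_subset_Icc_right hu1.2))
        intro x hx
        rw [interior_Icc] at hx
        have hx' : x ∈ Set.Ioo t1 (t1 + T') :=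
          ⟨hx.1, lt_of_lt_of_le hx.2 (hu1.2.trans hb2.le)⟩
        rw [(hzderiv x hx').deriv]
        have h1 : c / 2 < z x := hbefore x ⟨hx.1.le, hx.2⟩
        have h2 : z x ≤ y x := hyz x hx'
        have h3 : 0 < y x := lt_of_lt_of_le (lt_trans (by linarith) h1) h2
        simp only [hfdef]
        exact add_pos_of_pos_of_nonneg (mul_pos hA h3) (by positivity)
      have := hmono ⟨le_refl t1, hut1.le⟩ ⟨hut1.le, le_refl u⟩ hut1
      rw [hz_t1] at this
      exact absurd (this.trans_le hu2') (by linarith)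
    -- hence z ≥ c on Icc t1 b
    have hzc : ∀ t ∈ Set.Icc t1 b, c ≤ z t := by
      have hmono : MonotoneOn z (Set.Icc t1 b) := by
        apply monotoneOn_of_deriv_nonneg (convex_Icc t1 b) hz_cont
        · intro x hx
          rw [interior_Icc] at hx
          have hx' : x ∈ Set.Ioo t1 (t1 + T') := ⟨hx.1, hx.2.trans hb2⟩
          exact (hzderiv x hx').differentiableAt.differentiableWithinAt
        · intro x hx
          rw [interior_Icc] at hx
          have hx' : x ∈ Set.Ioo t1 (t1 + T') := ⟨hx.1, hx.2.trans hb2⟩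
          rw [(hzderiv x hx').deriv]
          have h1 : c / 2 < z x := half x ⟨hx.1.le, hx.2.le⟩
          have h2 : z x ≤ y x := hyz x hx'
          have h3 : 0 < y x := lt_of_lt_of_le (lt_trans (by linarith) h1) h2
          simp only [hfdef]
          exact le_of_lt (add_pos_of_pos_of_nonneg (mul_pos hA h3) (by positivity))
      intro t ht
      have := hmono ⟨le_refl t1, hb1.le⟩ ht ht.1
      rwa [hz_t1] at this
    -- the comparison function F
    set F : ℝ → ℝ := fun x => 1 / A * (Real.log x - Real.log (A + B * x)) with hFdef
    have hF' : ∀ x : ℝ, c ≤ x → HasDerivAt F (1 / (x * (A + B * x))) x := by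
      intro x hx
      have hx0 : 0 < x := lt_of_lt_of_le hc hx
      have hABx : 0 < A + B * x := by positivity
      have h1 : HasDerivAt Real.log x⁻¹ x := Real.hasDerivAt_log (ne_of_gt hx0)
      have h2 : HasDerivAt (fun s : ℝ => A + B * s) B x := by
        simpa using ((hasDerivAt_id x).const_mul B).const_add A
      have h3 : HasDerivAt (fun s : ℝ => Real.log (A + B * s)) (B / (A + B * x)) x :=
        h2.log (ne_of_gt hABx)
      have h4 := (h1.sub h3).const_mul (1 / A)
      refine h4.congr_deriv ?_
      field_simp
      ring
    -- g is monotone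
    set g : ℝ → ℝ := fun t => F (z t) - t with hgdef
    have hgderiv : ∀ x ∈ Set.Ioo t1 b,
        HasDerivAt g (1 / (z x * (A + B * z x)) * f x - 1) x := by
      intro x hx
      have hx' : x ∈ Set.Ioo t1 (t1 + T') := ⟨hx.1, hx.2.trans hb2⟩
      have hzx : c ≤ z x := hzc x ⟨hx.1.le, hx.2.le⟩
      have h1 := (hF' (z x) hzx).comp x (hzderiv x hx')
      simpa [hgdef] using h1.fun_sub (hasDerivAt_id' x)
    have hFcont : ContinuousOn F (Set.Ici c) := fun x hx =>
      ((hF' x hx).differentiableAt.continuousAt).continuousWithinAt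
    have hgcont : ContinuousOn g (Set.Icc t1 b) := by
      apply ContinuousOn.sub _ continuousOn_id
      exact hFcont.comp hz_cont (fun t ht => hzc t ht)
    have hgmono : MonotoneOn g (Set.Icc t1 b) := by
      apply monotoneOn_of_deriv_nonneg (convex_Icc t1 b) hgcont
      · intro x hx
        rw [interior_Icc] at hx
        exact (hgderiv x hx).differentiableAt.differentiableWithinAt
      · intro x hx
        rw [interior_Icc] at hx
        rw [(hgderiv x hx).deriv]
        have hx' : x ∈ Set.Ioo t1 (t1 + T') := ⟨hx.1, hx.2.trans hb2⟩
        have hzx : c ≤ z x := hzc x ⟨hx.1.le, hx.2.le⟩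
        have hyx : z x ≤ y x := hyz x hx'
        have hz0 : 0 < z x := lt_of_lt_of_le hc hzx
        have hden : 0 < z x * (A + B * z x) := by positivity
        have hnum : z x * (A + B * z x) ≤ f x := by
          simp only [hfdef]; exact harith (z x) (y x) hzx hyx
        have h1 : 1 ≤ f x / (z x * (A + B * z x)) := (one_le_div hden).mpr hnum
        have h2 : 1 / (z x * (A + B * z x)) * f x = f x / (z x * (A + B * z x)) := by
          ring
        rw [h2]
        exact sub_nonneg.mpr h1
    have hgb := hgmono ⟨le_refl t1, hb1.le⟩ ⟨hb1.le, le_refl b⟩ hb1.le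
    simp only [hgdef, hz_t1] at hgb
    -- hgb : F c - t1 ≤ F (z b) - b
    have hFbound : ∀ x : ℝ, c ≤ x → F x - F c ≤ T := by
      intro x hx
      have hx0 : 0 < x := lt_of_lt_of_le hc hx
      have hABx : 0 < A + B * x := by positivity
      have hABc : 0 < A + B * c := by positivity
      have h1 : Real.log (B * x) ≤ Real.log (A + B * x) :=
        Real.log_le_log (by positivity) (by linarith)
      have hlogBx : Real.log (B * x) = Real.log B + Real.log x :=
        Real.log_mul (ne_of_gt hB) (ne_of_gt hx0)
      have hT1 : 1 + A / (B * c) = (A + B * c) / (B * c) := by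
        field_simp
        ring
      have hlogT : Real.log (1 + A / (B * c))
          = Real.log (A + B * c) - (Real.log B + Real.log c) := by
        rw [hT1, Real.log_div (ne_of_gt hABc) (by positivity),
          Real.log_mul (ne_of_gt hB) (ne_of_gt hc)]
      simp only [hFdef, hTdef]
      have hAinv : 0 < 1 / A := by positivity
      have : Real.log x - Real.log (A + B * x) - (Real.log c - Real.log (A + B * c))
          ≤ Real.log (1 + A / (B * c)) := by
        rw [hlogT]; linarith [hlogBx ▸ h1]
      calc 1 / A * (Real.log x - Real.log (A + B * x))
            - 1 / A * (Real.log c - Real.log (A + B * c))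
          = 1 / A * (Real.log x - Real.log (A + B * x)
            - (Real.log c - Real.log (A + B * c))) := by ring
        _ ≤ 1 / A * Real.log (1 + A / (B * c)) :=
            mul_le_mul_of_nonneg_left this hAinv.le
    have hzb : c ≤ z b := hzc b ⟨hb1.le, le_refl b⟩
    have hfin := hFbound (z b) hzb
    clear_value f z F g
    linarith
  -- conclude
  by_contra hcon
  push_neg at hcon
  have hb : t1 + (T + T') / 2 ∈ Set.Ioo t1 (t1 + T') := by
    constructor <;> [linarith; linarith]
  have := key _ hb
  linarith
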